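/- Every countable conical commutative monoid admits an order-embedding into a countable conical refinement monoid. -/

import Mathlib

/-- The algebraic preorder on a commutative monoid: `x ≤ y` iff `∃ z, y = x + z`. -/
def AlgLE {M : Type*} [AddCommMonoid M] (x y : M) : Prop := ∃ z, y = x + z

/-- A monoid is conical if `x + y = 0` implies `x = 0` and `y = 0`. -/
def IsConical (M : Type*) [AddCommMonoid M] : Prop := ∀ x y : M, x + y = 0 → x = 0 ∧ y = 0

/-- A refinement monoid: every equality `a + b = c + d` admits a refinement. -/
def IsRefinement (M : Type*) [AddCommMonoid M] : Prop :=
  ∀ a b c d : M, a + b = c + d →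
    ∃ x y z w : M, a = x + y ∧ b = z + w ∧ c = x + z ∧ d = y + w

/-- Separative: `a + a = a + b` and `b + b = a + b` imply `a = b`. -/
def IsSeparative (M : Type*) [AddCommMonoid M] : Prop :=
  ∀ a b : M, a + a = a + b → b + b = a + b → a = b

/-- A prime element: `p ≠ 0` and `p ≤ a + b` implies `p ≤ a` or `p ≤ b`
(algebraic preorder). -/
def IsPrimeElem {M : Type*} [AddCommMonoid M] (p : M) : Prop :=
  p ≠ 0 ∧ ∀ a b : M, AlgLE p (a + b) → AlgLE p a ∨ AlgLE p b

/-- Primely generated: every element is a finite sum of prime elements. -/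
def PrimelyGenerated (M : Type*) [AddCommMonoid M] : Prop :=
  ∀ x : M, ∃ l : Multiset M, (∀ p ∈ l, IsPrimeElem p) ∧ x = l.sum

/-- Antisymmetric: the algebraic preorder is a partial order. -/
def IsAntisymmetric (M : Type*) [AddCommMonoid M] : Prop :=
  ∀ x y : M, AlgLE x y → AlgLE y x → x = y

/-- A primitive monoid: an antisymmetric, primely generated refinement monoid. -/
def IsPrimitive (M : Type*) [AddCommMonoid M] : Prop :=
  IsAntisymmetric M ∧ PrimelyGenerated M ∧ IsRefinement M

/-- `N` is a countable conical refinement monoid into which `M` order-embeds. -/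
def OrderEmbedsIntoCCRM (M : Type) [AddCommMonoid M] (N : Type) [AddCommMonoid N] : Prop :=
  Countable N ∧ IsConical N ∧ IsRefinement N ∧
    ∃ f : M →+ N, Function.Injective f ∧ ∀ x y : M, AlgLE x y ↔ AlgLE (f x) (f y)

set_option linter.dupNamespace false

namespace RefExt

variable {M : Type} [AddCommMonoid M]

/-- Indices: nondegenerate equations `a + b = c + d` with all entries nonzero. -/
def Idx (M : Type) [AddCommMonoid M] : Type :=
  {q : (M × M) × (M × M) // q.1.1 + q.1.2 = q.2.1 + q.2.2 ∧
      q.1.1 ≠ 0 ∧ q.1.2 ≠ 0 ∧ q.2.1 ≠ 0 ∧ q.2.2 ≠ 0}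

instance [Countable M] : Countable (Idx M) := Subtype.countable

/-- Generators of the extension: four per index. -/
abbrev Gen (M : Type) [AddCommMonoid M] : Type := Idx M × Bool × Bool

instance [Countable M] : Countable (Gen M) := by unfold Gen; infer_instance

/-- the constants of an equation: `cst e false v` is a row constant (a,b),
`cst e true v` a column constant (c,d). -/
def cst (e : Idx M) : Bool → Bool → M
  | false, false => e.1.1.1
  | false, true  => e.1.1.2
  | true,  false => e.1.2.1
  | true,  true  => e.1.2.2

theorem cst_eqn (e : Idx M) :
    cst e false false + cst e false true = cst e true false + cst e true true := e.2.1

theorem cst_ne_zero (e : Idx M) (k t : Bool) : cst e k t ≠ 0 := by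
  obtain ⟨h, h1, h2, h3, h4⟩ := e.2
  cases k <;> cases t <;> assumption

theorem cst_row_add (e : Idx M) (i : Bool) :
    cst e false i + cst e false (!i) = cst e true false + cst e true true := by
  cases i
  · exact cst_eqn e
  · rw [add_comm]; exact cst_eqn e

theorem cst_col_add (e : Idx M) (i : Bool) :
    cst e true i + cst e true (!i) = cst e true false + cst e true true := by
  cases i
  · rfl
  · rw [add_comm]; rfl

/-- the pair of generators consumed by a move: `k = false`: row `t`;
`k = true`: column `t`. -/
def gens (e : Idx M) : Bool → Bool → Multiset (Gen M)
  | false, t => {(e, (t, false)), (e, (t, true))}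
  | true,  t => {(e, (false, t)), (e, (true, t))}

theorem gens_row (e : Idx M) (t j : Bool) :
    ({(e, (t, j)), (e, (t, !j))} : Multiset (Gen M)) = gens e false t := by
  cases j
  · rfl
  · rw [Multiset.pair_comm]; rfl

theorem gens_col (e : Idx M) (t i : Bool) :
    ({(e, (i, t)), (e, (!i, t))} : Multiset (Gen M)) = gens e true t := by
  cases i
  · rfl
  · rw [Multiset.pair_comm]; rfl

theorem gens_card (e : Idx M) (k t : Bool) : Multiset.card (gens e k t) = 2 := by
  cases k <;> rfl

theorem gens_ne_zero (e : Idx M) (k t : Bool) : gens e k t ≠ 0 := by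
  intro h
  have := gens_card e k t
  rw [h] at this
  simp at this

/-- the carrier of the presentation. -/
abbrev Pre (M : Type) [AddCommMonoid M] : Type := M × Multiset (Gen M)

/-- a single (downward) rewriting step. -/
def Step (u v : Pre M) : Prop :=
  ∃ (e : Idx M) (k t : Bool) (m : M) (g : Multiset (Gen M)),
    u = (m, g + gens e k t) ∧ v = (m + cst e k t, g)

/-- generating relation of the congruence. -/
def Rel (u v : Pre M) : Prop :=
  ∃ (e : Idx M) (k t : Bool), u = (cst e k t, (0 : Multiset (Gen M))) ∧ v = (0, gens e k t)

/-- the congruence. -/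
def ExtCon (M : Type) [AddCommMonoid M] : AddCon (Pre M) := addConGen Rel

/-- the one-step refinement extension. -/
def Ext (M : Type) [AddCommMonoid M] : Type := (ExtCon M).Quotient

instance instAddCommMonoidExt : AddCommMonoid (Ext M) := by unfold Ext; infer_instance

instance instCountableExt [Countable M] : Countable (Ext M) :=
  inferInstanceAs (Countable (Quotient (ExtCon M).toSetoid))

end RefExt

namespace RefExt
open Relation
variable {M : Type} [AddCommMonoid M]

theorem Step.add_right {u v : Pre M} (h : Step u v) (t : Pre M) : Step (u + t) (v + t) := by
  obtain ⟨e, k, tt, m, g, hu, hv⟩ := h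
  exact ⟨e, k, tt, m + t.1, g + t.2, by
    subst hu; apply Prod.ext <;> simp [add_right_comm], by
    subst hv; apply Prod.ext <;> simp [add_right_comm]⟩

theorem eqvGen_add_right {u v : Pre M} (h : EqvGen (Step (M := M)) u v) (t : Pre M) :
    EqvGen (Step (M := M)) (u + t) (v + t) := by
  induction h with
  | rel x y hxy => exact EqvGen.rel _ _ (hxy.add_right t)
  | refl x => exact EqvGen.refl _
  | symm x y _ ih => exact (ih).symm _ _
  | trans x y z _ _ ih1 ih2 => exact ih1.trans _ _ _ ih2

theorem eqvGen_add {u v u' v' : Pre M} (h : EqvGen (Step (M := M)) u v)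
    (h' : EqvGen (Step (M := M)) u' v') : EqvGen (Step (M := M)) (u + u') (v + v') := by
  have h1 := eqvGen_add_right h u'
  have h2 := eqvGen_add_right h' v
  rw [add_comm u' v, add_comm v' v] at h2
  exact h1.trans _ _ _ h2

theorem extCon_iff_eqvGen {u v : Pre M} :
    ExtCon M u v ↔ EqvGen (Step (M := M)) u v := by
  constructor
  · intro h
    have h' : AddConGen.Rel (Rel (M := M)) u v := h
    clear h
    induction h' with
    | of x y hxy =>
        obtain ⟨e, k, t, hx, hy⟩ := hxy
        subst hx; subst hy
        exact (EqvGen.rel _ _ ⟨e, k, t, 0, 0, by simp, by simp⟩).symm _ _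
    | refl x => exact EqvGen.refl _
    | symm _ ih => exact EqvGen.symm _ _ ih
    | trans _ _ ih1 ih2 => exact EqvGen.trans _ _ _ ih1 ih2
    | add _ _ ih1 ih2 => exact eqvGen_add ih1 ih2
  · intro h
    induction h with
    | rel x y hxy =>
        obtain ⟨e, k, t, m, g, hx, hy⟩ := hxy
        subst hx; subst hy
        have base : ExtCon M (cst e k t, (0 : Multiset (Gen M))) (0, gens e k t) :=
          AddConGen.Rel.of _ _ ⟨e, k, t, rfl, rfl⟩
        have := (ExtCon M).add ((ExtCon M).refl ((m, g) : Pre M)) base.symm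
        have h1 : ((m, g) : Pre M) + (0, gens e k t) = (m, g + gens e k t) := by
          apply Prod.ext <;> simp
        have h2 : ((m, g) : Pre M) + (cst e k t, 0) = (m + cst e k t, g) := by
          apply Prod.ext <;> simp
        rwa [h1, h2] at this
    | refl x => exact (ExtCon M).refl x
    | symm x y _ ih => exact (ExtCon M).symm ih
    | trans x y z _ _ ih1 ih2 => exact (ExtCon M).trans ih1 ih2

end RefExt

namespace RefExt
open Relation
variable {M : Type} [AddCommMonoid M]

section MS
variable {α : Type*}

theorem cons_cases {x p q : α} {f g : Multiset α} (h : x ::ₘ f = p ::ₘ q ::ₘ g) :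
    (∃ g', g = x ::ₘ g' ∧ f = p ::ₘ q ::ₘ g') ∨ (x = p ∧ f = q ::ₘ g) ∨
      (x = q ∧ f = p ::ₘ g) := by
  rcases Multiset.cons_eq_cons.1 h with ⟨h1, h2⟩ | ⟨hne, cs, h1, h2⟩
  · exact Or.inr (Or.inl ⟨h1, h2⟩)
  · rcases Multiset.cons_eq_cons.1 h2 with ⟨e1, e2⟩ | ⟨ne2, cs2, e1, e2⟩
    · exact Or.inr (Or.inr ⟨e1.symm, by rw [h1, e2]⟩)
    · exact Or.inl ⟨cs2, e1, by rw [h1, e2]⟩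

theorem add_singleton_eq_cons (f : Multiset α) (x : α) : f + {x} = x ::ₘ f := by
  rw [add_comm, Multiset.singleton_add]

theorem split3 {x p q : α} {f g G : Multiset α} (hG : G = p ::ₘ {q})
    (h : f + {x} = g + G) :
    (∃ g', g = g' + {x} ∧ f = g' + G) ∨ (x = p ∧ f = g + {q}) ∨
      (x = q ∧ f = g + {p}) := by
  subst hG
  have h' : x ::ₘ f = p ::ₘ q ::ₘ g := by
    rw [← add_singleton_eq_cons, h, ← Multiset.singleton_add p (q ::ₘ g),
      ← Multiset.singleton_add q g, ← Multiset.singleton_add p {q}]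
    abel
  rcases cons_cases h' with ⟨g', h1, h2⟩ | ⟨h1, h2⟩ | ⟨h1, h2⟩
  · refine Or.inl ⟨g', by rw [h1, add_singleton_eq_cons], ?_⟩
    rw [h2, ← Multiset.singleton_add p (q ::ₘ g'), ← Multiset.singleton_add q g',
      ← Multiset.singleton_add p {q}]
    abel
  · exact Or.inr (Or.inl ⟨h1, by rw [h2, add_singleton_eq_cons]⟩)
  · exact Or.inr (Or.inr ⟨h1, by rw [h2, add_singleton_eq_cons]⟩)

theorem cons_ne_cases {x y : α} {f g : Multiset α} (hne : x ≠ y)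
    (h : f + {x} = g + {y}) : ∃ h', f = h' + {y} ∧ g = h' + {x} := by
  have h' : x ::ₘ f = y ::ₘ g := by
    rw [← add_singleton_eq_cons, h, add_singleton_eq_cons]
  rcases Multiset.cons_eq_cons.1 h' with ⟨h1, h2⟩ | ⟨_, cs, h1, h2⟩
  · exact absurd h1 hne
  · exact ⟨cs, by rw [h1, add_singleton_eq_cons], by rw [h2, add_singleton_eq_cons]⟩

end MS

/-- first and second generator consumed by a move. -/
def gA (e : Idx M) : Bool → Bool → Gen M
  | false, t => (e, (t, false))
  | true,  t => (e, (false, t))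

def gB (e : Idx M) : Bool → Bool → Gen M
  | false, t => (e, (t, true))
  | true,  t => (e, (true, t))

theorem gens_eq (e : Idx M) (k t : Bool) : gens e k t = gA e k t ::ₘ {gB e k t} := by
  cases k <;> rfl

/-- The cross-relation ("modulo" part of the confluence). -/
def RN (u v : Pre M) : Prop :=
  ∃ (e : Idx M) (i j : Bool) (n : M) (f : Multiset (Gen M)),
    u = (n + cst e false i, f + {(e, (!i, j))}) ∧
    v = (n + cst e true j, f + {(e, (i, !j))})

def RNs (u v : Pre M) : Prop := RN u v ∨ RN v u

theorem RNs.symm' {u v : Pre M} (h : RNs u v) : RNs v u := h.elim Or.inr Or.inl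

theorem RN_snd_ne_zero {u v : Pre M} (h : RN u v) : u.2 ≠ 0 ∧ v.2 ≠ 0 := by
  obtain ⟨e, i, j, n, f, hu, hv⟩ := h
  constructor
  · rw [hu]; simp [add_singleton_eq_cons]
  · rw [hv]; simp [add_singleton_eq_cons]

theorem RNs_snd_ne_zero {u v : Pre M} (h : RNs u v) : u.2 ≠ 0 ∧ v.2 ≠ 0 := by
  rcases h with h | h
  · exact RN_snd_ne_zero h
  · exact (RN_snd_ne_zero h).symm

end RefExt

namespace RefExt
open Relation
variable {M : Type} [AddCommMonoid M]

theorem pair_add (a b : Gen M) : ({a} : Multiset (Gen M)) + {b} = {a, b} :=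
  Multiset.singleton_add a {b}

theorem coherence {v w w₂ : Pre M} (hvw : RNs v w) (hst : Step w w₂) :
    ∃ v₂, Step v v₂ ∧ (v₂ = w₂ ∨ RNs v₂ w₂) := by
  obtain ⟨e', k', t', m, g, hw, hw2⟩ := hst
  rcases hvw with hn | hn
  -- Orientation 1 : `RN v w`
  · obtain ⟨e, i, j, n, f, hv, hw'⟩ := hn
    rw [hw'] at hw
    rw [Prod.mk.injEq] at hw
    obtain ⟨hm, hms⟩ := hw
    have cont_row : e = e' → i = t' → k' = false → f = g + {(e, (i, j))} →
        ∃ v₂, Step v v₂ ∧ (v₂ = w₂ ∨ RNs v₂ w₂) := by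
      intro he ht hk hf
      subst he; subst ht; subst hk
      refine ⟨((n + cst e false i) + cst e true j, g),
        ⟨e, true, j, n + cst e false i, g, ?_, rfl⟩, Or.inl ?_⟩
      · rw [hv, hf]
        rw [Prod.mk.injEq]
        refine ⟨rfl, ?_⟩
        rw [← gens_col e j i, ← pair_add]; abel
      · rw [hw2, ← hm]
        rw [Prod.mk.injEq]
        exact ⟨by abel, rfl⟩
    have cont_col : e = e' → (!j) = t' → k' = true → f = g + {(e, (!i, !j))} →
        ∃ v₂, Step v v₂ ∧ (v₂ = w₂ ∨ RNs v₂ w₂) := by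
      intro he ht hk hf
      subst he; subst ht; subst hk
      refine ⟨((n + cst e false i) + cst e false (!i), g),
        ⟨e, false, !i, n + cst e false i, g, ?_, rfl⟩, Or.inl ?_⟩
      · rw [hv, hf]
        rw [Prod.mk.injEq]
        refine ⟨rfl, ?_⟩
        have hg : ({(e, (!i, !j)), (e, (!i, !(!j)))} : Multiset (Gen M)) = gens e false (!i) :=
          gens_row e (!i) (!j)
        rw [Bool.not_not] at hg
        rw [← hg, ← pair_add]; abel
      · rw [hw2, ← hm]
        rw [Prod.mk.injEq]
        refine ⟨?_, rfl⟩
        rw [add_assoc, add_assoc, cst_row_add, cst_col_add]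
    rcases split3 (gens_eq e' k' t') hms with ⟨g', hg, hf⟩ | ⟨hx, hf⟩ | ⟨hx, hf⟩
    -- the extra generator survives the move
    · refine ⟨((n + cst e' k' t') + cst e false i, g' + {(e, (!i, j))}),
        ⟨e', k', t', n + cst e false i, g' + {(e, (!i, j))}, ?_, ?_⟩,
        Or.inr (Or.inl ⟨e, i, j, n + cst e' k' t', g', rfl, ?_⟩)⟩
      · rw [hv, hf]
        rw [Prod.mk.injEq]
        exact ⟨rfl, by abel⟩
      · rw [Prod.mk.injEq]
        exact ⟨by abel, rfl⟩
      · rw [hw2, ← hm, hg]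
        rw [Prod.mk.injEq]
        exact ⟨by abel, rfl⟩
    -- the extra generator is consumed, as the first generator of the move
    · cases k'
      · have hx' : ((e, (i, !j)) : Gen M) = (e', (t', false)) := hx
        rw [Prod.mk.injEq, Prod.mk.injEq] at hx'
        obtain ⟨he, ht, hj⟩ := hx'
        have hj' : j = true := by simpa using hj
        subst he; subst ht; subst hj'
        exact cont_row rfl rfl rfl (by rw [hf]; simp [gB])
      · have hx' : ((e, (i, !j)) : Gen M) = (e', (false, t')) := hx
        rw [Prod.mk.injEq, Prod.mk.injEq] at hx'
        obtain ⟨he, hi, ht⟩ := hx'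
        subst he; subst ht; subst hi
        exact cont_col rfl rfl rfl (by rw [hf]; simp [gB])
    -- consumed as the second generator of the move
    · cases k'
      · have hx' : ((e, (i, !j)) : Gen M) = (e', (t', true)) := hx
        rw [Prod.mk.injEq, Prod.mk.injEq] at hx'
        obtain ⟨he, ht, hj⟩ := hx'
        have hj' : j = false := by simpa using hj
        subst he; subst ht; subst hj'
        exact cont_row rfl rfl rfl (by rw [hf]; simp [gA])
      · have hx' : ((e, (i, !j)) : Gen M) = (e', (true, t')) := hx
        rw [Prod.mk.injEq, Prod.mk.injEq] at hx'
        obtain ⟨he, hi, ht⟩ := hx'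
        subst he; subst ht; subst hi
        exact cont_col rfl rfl rfl (by rw [hf]; simp [gA])
  -- Orientation 2 : `RN w v`
  · obtain ⟨e, i, j, n, f, hw', hv⟩ := hn
    rw [hw'] at hw
    rw [Prod.mk.injEq] at hw
    obtain ⟨hm, hms⟩ := hw
    have cont_row : e = e' → j = t' → k' = true → f = g + {(e, (i, j))} →
        ∃ v₂, Step v v₂ ∧ (v₂ = w₂ ∨ RNs v₂ w₂) := by
      intro he ht hk hf
      subst he; subst ht; subst hk
      refine ⟨((n + cst e true j) + cst e false i, g),
        ⟨e, false, i, n + cst e true j, g, ?_, rfl⟩, Or.inl ?_⟩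
      · rw [hv, hf]
        rw [Prod.mk.injEq]
        refine ⟨rfl, ?_⟩
        rw [← gens_row e i j, ← pair_add]; abel
      · rw [hw2, ← hm]
        rw [Prod.mk.injEq]
        exact ⟨by abel, rfl⟩
    have cont_col : e = e' → (!i) = t' → k' = false → f = g + {(e, (!i, !j))} →
        ∃ v₂, Step v v₂ ∧ (v₂ = w₂ ∨ RNs v₂ w₂) := by
      intro he ht hk hf
      subst he; subst ht; subst hk
      refine ⟨((n + cst e true j) + cst e true (!j), g),
        ⟨e, true, !j, n + cst e true j, g, ?_, rfl⟩, Or.inl ?_⟩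
      · rw [hv, hf]
        rw [Prod.mk.injEq]
        refine ⟨rfl, ?_⟩
        have hg : ({(e, (!i, !j)), (e, (!(!i), !j))} : Multiset (Gen M)) = gens e true (!j) :=
          gens_col e (!j) (!i)
        rw [Bool.not_not] at hg
        rw [← hg, ← pair_add]; abel
      · rw [hw2, ← hm]
        rw [Prod.mk.injEq]
        refine ⟨?_, rfl⟩
        rw [add_assoc, add_assoc, cst_row_add, cst_col_add]
    rcases split3 (gens_eq e' k' t') hms with ⟨g', hg, hf⟩ | ⟨hx, hf⟩ | ⟨hx, hf⟩
    · refine ⟨((n + cst e' k' t') + cst e true j, g' + {(e, (i, !j))}),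
        ⟨e', k', t', n + cst e true j, g' + {(e, (i, !j))}, ?_, ?_⟩,
        Or.inr (Or.inr ⟨e, i, j, n + cst e' k' t', g', ?_, rfl⟩)⟩
      · rw [hv, hf]
        rw [Prod.mk.injEq]
        exact ⟨rfl, by abel⟩
      · rw [Prod.mk.injEq]
        exact ⟨by abel, rfl⟩
      · rw [hw2, ← hm, hg]
        rw [Prod.mk.injEq]
        exact ⟨by abel, rfl⟩
    · cases k'
      · have hx' : ((e, (!i, j)) : Gen M) = (e', (t', false)) := hx
        rw [Prod.mk.injEq, Prod.mk.injEq] at hx'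
        obtain ⟨he, ht, hj⟩ := hx'
        subst he; subst ht; subst hj
        exact cont_col rfl rfl rfl (by rw [hf]; simp [gB])
      · have hx' : ((e, (!i, j)) : Gen M) = (e', (false, t')) := hx
        rw [Prod.mk.injEq, Prod.mk.injEq] at hx'
        obtain ⟨he, hi, ht⟩ := hx'
        have hi' : i = true := by simpa using hi
        subst he; subst ht; subst hi'
        exact cont_row rfl rfl rfl (by rw [hf]; simp [gB])
    · cases k'
      · have hx' : ((e, (!i, j)) : Gen M) = (e', (t', true)) := hx
        rw [Prod.mk.injEq, Prod.mk.injEq] at hx'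
        obtain ⟨he, ht, hj⟩ := hx'
        subst he; subst ht; subst hj
        exact cont_col rfl rfl rfl (by rw [hf]; simp [gA])
      · have hx' : ((e, (!i, j)) : Gen M) = (e', (true, t')) := hx
        rw [Prod.mk.injEq, Prod.mk.injEq] at hx'
        obtain ⟨he, hi, ht⟩ := hx'
        have hi' : i = false := by simpa using hi
        subst he; subst ht; subst hi'
        exact cont_row rfl rfl rfl (by rw [hf]; simp [gA])

end RefExt

namespace RefExt
open Relation
variable {M : Type} [AddCommMonoid M]

theorem mem_gens {p : Gen M} {e : Idx M} {k t : Bool} (h : p ∈ gens e k t) :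
    p.1 = e ∧ (if k then p.2.2 = t else p.2.1 = t) := by
  cases k <;> simp [gens] at h <;>
    rcases h with h | h <;> subst h <;> simp

theorem gens_disjoint {e e' : Idx M} {k t k' t' : Bool}
    (h : e ≠ e' ∨ (k = k' ∧ t ≠ t')) {p : Gen M}
    (hp : p ∈ gens e k t) : p ∉ gens e' k' t' := by
  intro hp'
  obtain ⟨h1, h2⟩ := mem_gens hp
  obtain ⟨h1', h2'⟩ := mem_gens hp'
  rcases h with h | ⟨rfl, ht⟩
  · exact h (h1.symm.trans h1')
  · cases k
    · simp only [if_false, Bool.false_eq_true] at h2 h2'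
      exact ht (h2.symm.trans h2')
    · simp only [if_true] at h2 h2'
      exact ht (h2.symm.trans h2')

theorem Step.card {u v : Pre M} (h : Step u v) :
    Multiset.card u.2 = Multiset.card v.2 + 2 := by
  obtain ⟨e, k, t, m, g, hu, hv⟩ := h
  rw [hu, hv]
  simp [gens_card]

theorem step_not_from_pure {p : M} {v : Pre M} (h : Step ((p, 0) : Pre M) v) : False := by
  have := h.card
  simp at this

theorem local_confl {u v w : Pre M} (h1 : Step u v) (h2 : Step u w) :
    v = w ∨ (∃ x, Step v x ∧ Step w x) ∨ RNs v w := by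
  classical
  obtain ⟨e, k, t, m, g, hu, hv⟩ := h1
  obtain ⟨e', k', t', m', g', hu', hw⟩ := h2
  rw [hu] at hu'
  rw [Prod.mk.injEq] at hu'
  obtain ⟨hmm, hgg⟩ := hu'
  have disj : (e ≠ e' ∨ (k = k' ∧ t ≠ t')) →
      v = w ∨ (∃ x, Step v x ∧ Step w x) ∨ RNs v w := by
    intro hd
    refine Or.inr (Or.inl ?_)
    have hle : gens e' k' t' ≤ g := by
      rw [Multiset.le_iff_count]
      intro p
      by_cases hp : p ∈ gens e' k' t'
      · have hcnt : Multiset.count p (g + gens e k t) =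
            Multiset.count p (g' + gens e' k' t') := by rw [hgg]
        rw [Multiset.count_add, Multiset.count_add] at hcnt
        have h0 : Multiset.count p (gens e k t) = 0 := by
          rw [Multiset.count_eq_zero]
          intro hmem
          exact gens_disjoint hd hmem hp
        omega
      · rw [Multiset.count_eq_zero_of_notMem hp]
        omega
    obtain ⟨h, hgeq⟩ : ∃ h, g = h + gens e' k' t' :=
      ⟨g - gens e' k' t', (tsub_add_cancel_of_le hle).symm⟩
    have hg' : g' = h + gens e k t := by
      have : (h + gens e k t) + gens e' k' t' = g' + gens e' k' t' := by
        rw [← hgg, hgeq]; abel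
      exact (add_right_cancel this).symm
    refine ⟨((m + cst e k t) + cst e' k' t', h),
      ⟨e', k', t', m + cst e k t, h, by rw [hv, hgeq], rfl⟩,
      ⟨e, k, t, m' + cst e' k' t', h, by rw [hw, hg'], ?_⟩⟩
    rw [Prod.mk.injEq, ← hmm]
    exact ⟨by abel, rfl⟩
  by_cases he : e = e'
  · subst he
    by_cases hk : k = k'
    · subst hk
      by_cases ht : t = t'
      · subst ht
        left
        have : g = g' := add_right_cancel hgg
        rw [hv, hw, ← hmm, this]
      · exact disj (Or.inr ⟨rfl, ht⟩)
    · -- cross case : refinement of two moves sharing one generator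
      refine Or.inr (Or.inr ?_)
      cases k
      · -- k = false, so k' = true
        have hk' : k' = true := by revert hk; cases k' <;> simp
        subst hk'
        have hrow : gens e false t = {(e, (t, t'))} + {(e, (t, !t'))} := by
          rw [pair_add, gens_row]
        have hcol : gens e true t' = {(e, (t, t'))} + {(e, (!t, t'))} := by
          rw [pair_add, gens_col]
        rw [hrow, hcol] at hgg
        have hgg' : g + {(e, (t, !t'))} = g' + {(e, (!t, t'))} := by
          have H : ({(e, (t, t'))} : Multiset (Gen M)) + (g + {(e, (t, !t'))}) =
              {(e, (t, t'))} + (g' + {(e, (!t, t'))}) := by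
            convert hgg using 1 <;> abel
          exact add_left_cancel H
        have hne : ((e, (t, !t')) : Gen M) ≠ (e, (!t, t')) := by
          intro hcon
          rw [Prod.mk.injEq, Prod.mk.injEq] at hcon
          have := hcon.2.1
          revert this; cases t <;> simp
        obtain ⟨h, hgh, hg'h⟩ := cons_ne_cases hne hgg'
        left
        exact ⟨e, t, t', m, h, by rw [hv, hgh], by rw [hw, hg'h, ← hmm]⟩
      · -- k = true, so k' = false
        have hk' : k' = false := by revert hk; cases k' <;> simp
        subst hk'
        have hcol : gens e true t = {(e, (t', t))} + {(e, (!t', t))} := by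
          rw [pair_add, gens_col]
        have hrow : gens e false t' = {(e, (t', t))} + {(e, (t', !t))} := by
          rw [pair_add, gens_row]
        rw [hcol, hrow] at hgg
        have hgg' : g' + {(e, (t', !t))} = g + {(e, (!t', t))} := by
          have H : ({(e, (t', t))} : Multiset (Gen M)) + (g' + {(e, (t', !t))}) =
              {(e, (t', t))} + (g + {(e, (!t', t))}) := by
            convert hgg.symm using 1 <;> abel
          exact add_left_cancel H
        have hne : ((e, (t', !t)) : Gen M) ≠ (e, (!t', t)) := by
          intro hcon
          rw [Prod.mk.injEq, Prod.mk.injEq] at hcon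
          have := hcon.2.1
          revert this; cases t' <;> simp
        obtain ⟨h, hg'h, hgh⟩ := cons_ne_cases hne hgg'
        right
        exact ⟨e, t', t, m, h, by rw [hw, hg'h, ← hmm], by rw [hv, hgh]⟩
  · exact disj (Or.inl he)

end RefExt

namespace RefExt
open Relation
variable {M : Type} [AddCommMonoid M]

/-- reachability of a pure state by downward rewriting. -/
def Reach (p : M) (u : Pre M) : Prop :=
  Relation.ReflTransGen Step u ((p, 0) : Pre M)

theorem reach_of_RNs {p : M} {w : Pre M} (hw : Reach p w) :
    ∀ v : Pre M, RNs v w → Reach p v := by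
  induction hw using Relation.ReflTransGen.head_induction_on with
  | refl =>
      intro v hv
      exact absurd rfl (RNs_snd_ne_zero hv).2
  | head hstep hchain ih =>
      intro v hv
      obtain ⟨v₂, hsv, heq | hrn⟩ := coherence hv hstep
      · exact Relation.ReflTransGen.head hsv (heq ▸ hchain)
      · exact Relation.ReflTransGen.head hsv (ih v₂ hrn)

theorem reach_step {p : M} :
    ∀ (n : ℕ) (u : Pre M), Multiset.card u.2 ≤ n → Reach p u →
      ∀ v, Step u v → Reach p v := by
  intro n
  induction n with
  | zero =>
      intro u hc _ v hs
      have := hs.card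
      omega
  | succ n ih =>
      intro u hc hr v hs
      rcases Relation.ReflTransGen.cases_head hr with heq | ⟨w, hsw, hw⟩
      · rw [heq] at hs
        exact absurd hs step_not_from_pure
      · rcases local_confl hs hsw with rfl | ⟨x, hvx, hwx⟩ | hrn
        · exact hw
        · have hcw : Multiset.card w.2 ≤ n := by
            have := hsw.card
            omega
          exact Relation.ReflTransGen.head hvx (ih w hcw hw x hwx)
        · exact reach_of_RNs hw v hrn

theorem eqv_reach {u v : Pre M} (h : EqvGen (Step (M := M)) u v) (p : M) :
    Reach p u ↔ Reach p v := by
  induction h with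
  | rel x y hs =>
      constructor
      · intro hx
        exact reach_step (Multiset.card x.2) x le_rfl hx y hs
      · intro hy
        exact Relation.ReflTransGen.head hs hy
  | refl x => rfl
  | symm x y _ ih => exact ih.symm
  | trans x y z _ _ ih1 ih2 => exact ih1.trans ih2

theorem reach_pure {x p : M} (h : Reach p ((x, 0) : Pre M)) : x = p := by
  rcases Relation.ReflTransGen.cases_head h with heq | ⟨w, hsw, _⟩
  · exact (Prod.mk.injEq .. ▸ heq).1
  · exact absurd hsw step_not_from_pure

theorem algLE_refl (x : M) : AlgLE x x := ⟨0, (add_zero x).symm⟩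

theorem algLE_trans {x y z : M} (h1 : AlgLE x y) (h2 : AlgLE y z) : AlgLE x z := by
  obtain ⟨a, ha⟩ := h1
  obtain ⟨b, hb⟩ := h2
  exact ⟨a + b, by rw [hb, ha, add_assoc]⟩

theorem reach_mono {p : M} {u : Pre M} (h : Reach p u) : AlgLE u.1 p := by
  induction h using Relation.ReflTransGen.head_induction_on with
  | refl => exact algLE_refl p
  | head hstep _ ih =>
      obtain ⟨e, k, t, m, g, hu, hv⟩ := hstep
      refine algLE_trans ?_ ih
      rw [hu, hv]
      exact ⟨cst e k t, rfl⟩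

theorem reach_zero (hM : IsConical M) {u : Pre M} (h : Reach 0 u) :
    u = ((0 : M), (0 : Multiset (Gen M))) := by
  induction h using Relation.ReflTransGen.head_induction_on with
  | refl => rfl
  | head hstep _ ih =>
      obtain ⟨e, k, t, m, g, hu, hv⟩ := hstep
      rw [ih] at hv
      exfalso
      exact cst_ne_zero e k t (hM m (cst e k t) (Prod.mk.injEq .. ▸ hv).1.symm).2

/-- The canonical map into the extension. -/
def ιExt : M →+ Ext M :=
  (ExtCon M).mk'.comp (AddMonoidHom.inl M (Multiset (Gen M)))

theorem mk'_eq_iff {u v : Pre M} :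
    (ExtCon M).mk' u = (ExtCon M).mk' v ↔ EqvGen (Step (M := M)) u v := by
  have h1 : ((ExtCon M).mk' u = (ExtCon M).mk' v) ↔ ExtCon M u v := by
    rw [AddCon.coe_mk']
    exact AddCon.eq _
  exact h1.trans extCon_iff_eqvGen

end RefExt

namespace RefExt
open Relation
variable {M : Type} [AddCommMonoid M]

theorem ιExt_injective : Function.Injective (ιExt (M := M)) := by
  intro x y h
  have h' : EqvGen (Step (M := M)) ((x, 0) : Pre M) ((y, 0) : Pre M) := mk'_eq_iff.1 h
  have hr : Reach y ((x, 0) : Pre M) :=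
    (eqv_reach h' y).2 Relation.ReflTransGen.refl
  exact reach_pure hr

theorem algLE_map {N : Type*} [AddCommMonoid N] (f : M →+ N) {x y : M}
    (h : AlgLE x y) : AlgLE (f x) (f y) := by
  obtain ⟨z, hz⟩ := h
  exact ⟨f z, by rw [hz, map_add]⟩

theorem ιExt_reflect {x y : M} (h : AlgLE (ιExt x) (ιExt y)) : AlgLE x y := by
  obtain ⟨z, hz⟩ := h
  obtain ⟨u, rfl⟩ := AddCon.mk'_surjective (c := ExtCon M) z
  have hz' : (ExtCon M).mk' (((x, 0) : Pre M) + u) = (ExtCon M).mk' ((y, 0) : Pre M) := by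
    rw [map_add]
    exact hz.symm
  have h' := mk'_eq_iff.1 hz'
  have hr : Reach y (((x, 0) : Pre M) + u) :=
    (eqv_reach h' y).2 Relation.ReflTransGen.refl
  have hmono := reach_mono hr
  have hfst : (((x, 0) : Pre M) + u).1 = x + u.1 := rfl
  rw [hfst] at hmono
  exact algLE_trans ⟨u.1, rfl⟩ hmono

theorem ext_conical (hM : IsConical M) : IsConical (Ext M) := by
  intro α β h
  obtain ⟨u, rfl⟩ := AddCon.mk'_surjective (c := ExtCon M) α
  obtain ⟨v, rfl⟩ := AddCon.mk'_surjective (c := ExtCon M) β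
  have h0 : (ExtCon M).mk' (u + v) =
      (ExtCon M).mk' (((0 : M), (0 : Multiset (Gen M))) : Pre M) := by
    rw [map_add]; refine (congrArg id h).trans ?_
    exact (map_zero _).symm
  have h' := mk'_eq_iff.1 h0
  have hr : Reach (0 : M) (u + v) :=
    (eqv_reach h' 0).2 Relation.ReflTransGen.refl
  have huv := reach_zero hM hr
  have h1 : u.1 + v.1 = 0 := congrArg Prod.fst huv
  have h2 : u.2 + v.2 = 0 := congrArg Prod.snd huv
  obtain ⟨hu1, hv1⟩ := hM _ _ h1
  have hc : Multiset.card u.2 + Multiset.card v.2 = 0 := by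
    have := congrArg Multiset.card h2
    simpa using this
  have hu2 : u.2 = 0 := Multiset.card_eq_zero.1 (by omega)
  have hv2 : v.2 = 0 := Multiset.card_eq_zero.1 (by omega)
  have hu : u = 0 := Prod.ext hu1 hu2
  have hv : v = 0 := Prod.ext hv1 hv2
  rw [hu, hv]
  exact ⟨map_zero _, map_zero _⟩

theorem ext_refine {a b c d : M} (he : a + b = c + d)
    (ha : a ≠ 0) (hb : b ≠ 0) (hc : c ≠ 0) (hd : d ≠ 0) :
    ∃ x y z w : Ext M, ιExt a = x + y ∧ ιExt b = z + w ∧ ιExt c = x + z ∧ ιExt d = y + w := by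
  let e : Idx M := ⟨((a, b), (c, d)), he, ha, hb, hc, hd⟩
  let gen : Bool × Bool → Ext M := fun ij =>
    (ExtCon M).mk' (((0 : M), ({(e, ij)} : Multiset (Gen M))) : Pre M)
  have hrel : ∀ k t : Bool, ιExt (cst e k t) =
      (ExtCon M).mk' (((0 : M), gens e k t) : Pre M) := by
    intro k t
    exact (AddCon.eq (ExtCon M)).2 (AddConGen.Rel.of _ _ ⟨e, k, t, rfl, rfl⟩)
  have hadd : ∀ p q : Bool × Bool, gen p + gen q =
      (ExtCon M).mk' (((0 : M), ({(e, p), (e, q)} : Multiset (Gen M))) : Pre M) := by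
    intro p q
    show (ExtCon M).mk' _ + (ExtCon M).mk' _ = _
    rw [← map_add]
    congr 1
    exact Prod.ext (by simp) (pair_add _ _)
  refine ⟨gen (false, false), gen (false, true), gen (true, false), gen (true, true),
    ?_, ?_, ?_, ?_⟩
  · rw [hadd]; exact hrel false false
  · rw [hadd]; exact hrel false true
  · rw [hadd]; exact hrel true false
  · rw [hadd]; exact hrel true true

end RefExt

namespace RefExt
open Relation

variable (M : Type) [AddCommMonoid M]

/-- the tower of iterated extensions. -/
def SB : ℕ → Σ α : Type, AddCommMonoid α
  | 0 => ⟨M, inferInstance⟩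
  | n + 1 => ⟨@Ext (SB n).1 (SB n).2, @instAddCommMonoidExt (SB n).1 (SB n).2⟩

abbrev S (n : ℕ) : Type := (SB M n).1

instance instS (n : ℕ) : AddCommMonoid (S M n) := (SB M n).2

def stepHom (n : ℕ) : S M n →+ S M (n + 1) := @ιExt (S M n) _

theorem stepHom_injective (n : ℕ) : Function.Injective (stepHom M n) :=
  ιExt_injective

theorem countable_S [Countable M] : ∀ n, Countable (S M n)
  | 0 => ‹Countable M›
  | n + 1 => @instCountableExt (S M n) _ (countable_S n)

theorem conical_S (hM : IsConical M) : ∀ n, IsConical (S M n)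
  | 0 => hM
  | n + 1 => ext_conical (conical_S hM n)

def leMap {m n : ℕ} (h : m ≤ n) : S M m →+ S M n :=
  Nat.leRecOn h (fun {k} f => (stepHom M k).comp f) (AddMonoidHom.id (S M m))

theorem leMap_refl {m : ℕ} (h : m ≤ m) (x : S M m) : leMap M h x = x := by
  have he : leMap M h = AddMonoidHom.id (S M m) := by
    simp only [leMap]
    exact Nat.leRecOn_self _
  rw [he]
  rfl

theorem leMap_succ {m n : ℕ} (h : m ≤ n) (h' : m ≤ n + 1) (x : S M m) :
    leMap M h' x = stepHom M n (leMap M h x) := by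
  have he : leMap M h' = (stepHom M n).comp (leMap M h) := by
    simp only [leMap]
    exact Nat.leRecOn_succ h _
  rw [he]
  rfl

theorem leMap_trans {a b c : ℕ} (hab : a ≤ b) (hbc : b ≤ c) (x : S M a) :
    leMap M hbc (leMap M hab x) = leMap M (hab.trans hbc) x := by
  induction c with
  | zero =>
      have hb0 : b = 0 := Nat.le_zero.1 hbc
      subst hb0
      have ha0 : a = 0 := Nat.le_zero.1 hab
      subst ha0
      rw [leMap_refl, leMap_refl]
  | succ c ih =>
      rcases Nat.lt_or_ge b (c + 1) with hlt | hge
      · have hb : b ≤ c := Nat.lt_succ_iff.1 hlt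
        rw [leMap_succ M hb hbc, leMap_succ M (hab.trans hb) (hab.trans hbc)]
        exact congrArg (stepHom M c) (ih hb)
      · have hb : b = c + 1 := le_antisymm hbc hge
        subst hb
        rw [leMap_refl]

theorem leMap_injective {m n : ℕ} (h : m ≤ n) : Function.Injective (leMap M h) := by
  induction n with
  | zero =>
      have : m = 0 := Nat.le_zero.1 h
      subst this
      intro x y hxy
      rwa [leMap_refl, leMap_refl] at hxy
  | succ n ih =>
      rcases Nat.lt_or_ge m (n + 1) with hlt | hge
      · have h' : m ≤ n := Nat.lt_succ_iff.1 hlt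
        intro x y hxy
        rw [leMap_succ M h', leMap_succ M h'] at hxy
        exact ih h' (stepHom_injective M n hxy)
      · have : m = n + 1 := le_antisymm h hge
        subst this
        intro x y hxy
        rwa [leMap_refl, leMap_refl] at hxy

end RefExt

namespace RefExt
open Relation

variable (M : Type) [AddCommMonoid M]

instance instCountableS [Countable M] (n : ℕ) : Countable (S M n) := countable_S M n

theorem leMap_comp {a b c : ℕ} (h1 : a ≤ b) (h2 : b ≤ c) (h3 : a ≤ c) (x : S M a) :
    leMap M h2 (leMap M h1 x) = leMap M h3 x := leMap_trans M h1 h2 x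

/-- the underlying data of the colimit. -/
def ColPre : Type := Σ n : ℕ, S M n

instance : ∀ n : ℕ, AddCommMonoid ((fun n => S M n) n) := fun n => instS M n

instance instCountableColPre [Countable M] : Countable (ColPre M) := by
  unfold ColPre; infer_instance

def colRel (u v : ColPre M) : Prop :=
  ∃ (k : ℕ) (h1 : u.1 ≤ k) (h2 : v.1 ≤ k), leMap M h1 u.2 = leMap M h2 v.2

theorem colRel_intro {a b : ℕ} {x : S M a} {y : S M b} (k : ℕ) (h1 : a ≤ k) (h2 : b ≤ k)
    (h : leMap M h1 x = leMap M h2 y) : colRel M ⟨a, x⟩ ⟨b, y⟩ := ⟨k, h1, h2, h⟩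

def ColSetoid : Setoid (ColPre M) where
  r := colRel M
  iseqv := by
    constructor
    · intro u
      exact ⟨u.1, le_rfl, le_rfl, rfl⟩
    · rintro u v ⟨k, h1, h2, hk⟩
      exact ⟨k, h2, h1, hk.symm⟩
    · rintro u v w ⟨k, h1, h2, hk⟩ ⟨l, g1, g2, gl⟩
      refine ⟨max k l, le_trans h1 (le_max_left k l), le_trans g2 (le_max_right k l), ?_⟩
      calc leMap M (le_trans h1 (le_max_left k l)) u.2
          = leMap M (le_max_left k l) (leMap M h1 u.2) := (leMap_comp M _ _ _ _).symm
        _ = leMap M (le_max_left k l) (leMap M h2 v.2) := by rw [hk]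
        _ = leMap M (le_trans h2 (le_max_left k l)) v.2 := leMap_comp M _ _ _ _
        _ = leMap M (le_max_right k l) (leMap M g1 v.2) := (leMap_comp M _ _ _ _).symm
        _ = leMap M (le_max_right k l) (leMap M g2 w.2) := by rw [gl]
        _ = leMap M (le_trans g2 (le_max_right k l)) w.2 := leMap_comp M _ _ _ _

/-- the colimit of the tower. -/
def Col : Type := Quotient (ColSetoid M)

instance instCountableCol [Countable M] : Countable (Col M) :=
  inferInstanceAs (Countable (Quotient (ColSetoid M)))

def cmk (n : ℕ) (x : S M n) : Col M := Quotient.mk (ColSetoid M) ⟨n, x⟩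

theorem cmk_surjective (α : Col M) : ∃ n x, α = cmk M n x := by
  obtain ⟨⟨n, x⟩, rfl⟩ := Quotient.exists_rep α
  exact ⟨n, x, rfl⟩

theorem cmk_eq_of_le {n k : ℕ} (h : n ≤ k) (x : S M n) :
    cmk M n x = cmk M k (leMap M h x) :=
  Quotient.sound ⟨k, h, le_rfl, by rw [leMap_refl]⟩

theorem cmk_exact {a b : ℕ} {x : S M a} {y : S M b} (h : cmk M a x = cmk M b y) :
    ∃ (k : ℕ) (h1 : a ≤ k) (h2 : b ≤ k), leMap M h1 x = leMap M h2 y :=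
  Quotient.exact h

instance : Add (Col M) :=
  ⟨Quotient.map₂
    (fun u v => (⟨max u.1 v.1, leMap M (le_max_left u.1 v.1) u.2 +
      leMap M (le_max_right u.1 v.1) v.2⟩ : ColPre M))
    (by
      rintro u u' ⟨k, hk1, hk2, hk⟩ v v' ⟨l, hl1, hl2, hl⟩
      set K := max (max (max u.1 v.1) (max u'.1 v'.1)) (max k l) with hK
      have hu : u.1 ≤ K := by omega
      have hv : v.1 ≤ K := by omega
      have hu' : u'.1 ≤ K := by omega
      have hv' : v'.1 ≤ K := by omega
      have hkK : k ≤ K := by omega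
      have hlK : l ≤ K := by omega
      refine colRel_intro M K (by omega) (by omega) ?_
      rw [map_add, map_add]
      rw [leMap_comp M _ _ hu, leMap_comp M _ _ hv, leMap_comp M _ _ hu', leMap_comp M _ _ hv']
      have e1 : leMap M hu u.2 = leMap M hu' u'.2 := by
        calc leMap M hu u.2 = leMap M hkK (leMap M hk1 u.2) := (leMap_comp M _ _ _ _).symm
          _ = leMap M hkK (leMap M hk2 u'.2) := by rw [hk]
          _ = leMap M hu' u'.2 := leMap_comp M _ _ _ _
      have e2 : leMap M hv v.2 = leMap M hv' v'.2 := by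
        calc leMap M hv v.2 = leMap M hlK (leMap M hl1 v.2) := (leMap_comp M _ _ _ _).symm
          _ = leMap M hlK (leMap M hl2 v'.2) := by rw [hl]
          _ = leMap M hv' v'.2 := leMap_comp M _ _ _ _
      rw [e1, e2])⟩

theorem cmk_add {a b K : ℕ} (ha : a ≤ K) (hb : b ≤ K) (x : S M a) (y : S M b) :
    cmk M a x + cmk M b y = cmk M K (leMap M ha x + leMap M hb y) := by
  have hab : max a b ≤ K := max_le ha hb
  show cmk M (max a b) _ = _
  rw [cmk_eq_of_le M hab, map_add, leMap_comp M _ _ ha, leMap_comp M _ _ hb]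

instance : Zero (Col M) := ⟨cmk M 0 0⟩

theorem cmk_zero (n : ℕ) : cmk M n 0 = 0 := by
  show _ = cmk M 0 0
  rw [cmk_eq_of_le M (Nat.zero_le n) 0, map_zero]

instance instAddCommMonoidCol : AddCommMonoid (Col M) where
  add_assoc := by
    intro α β γ
    obtain ⟨a, x, rfl⟩ := cmk_surjective M α
    obtain ⟨b, y, rfl⟩ := cmk_surjective M β
    obtain ⟨c, z, rfl⟩ := cmk_surjective M γ
    set K := max (max a b) c
    have ha : a ≤ K := by omega
    have hb : b ≤ K := by omega
    have hc : c ≤ K := by omega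
    rw [cmk_add M ha hb, cmk_add M le_rfl hc, cmk_add M hb hc, cmk_add M ha le_rfl,
      leMap_refl, leMap_refl, add_assoc]
  zero_add := by
    intro α
    obtain ⟨a, x, rfl⟩ := cmk_surjective M α
    show cmk M 0 0 + cmk M a x = cmk M a x
    rw [cmk_add M (Nat.zero_le a) le_rfl, map_zero, leMap_refl, zero_add]
  add_zero := by
    intro α
    obtain ⟨a, x, rfl⟩ := cmk_surjective M α
    show cmk M a x + cmk M 0 0 = cmk M a x
    rw [cmk_add M le_rfl (Nat.zero_le a), map_zero, leMap_refl, add_zero]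
  add_comm := by
    intro α β
    obtain ⟨a, x, rfl⟩ := cmk_surjective M α
    obtain ⟨b, y, rfl⟩ := cmk_surjective M β
    have ha : a ≤ max a b := le_max_left a b
    have hb : b ≤ max a b := le_max_right a b
    rw [cmk_add M ha hb, cmk_add M hb ha, add_comm]
  nsmul := nsmulRec

end RefExt

namespace RefExt
open Relation

variable (M : Type) [AddCommMonoid M]

theorem cmk_exact' {K : ℕ} {x y : S M K} (h : cmk M K x = cmk M K y) :
    ∃ (k : ℕ) (hk : K ≤ k), leMap M hk x = leMap M hk y := by
  obtain ⟨k, h1, h2, heq⟩ := cmk_exact M h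
  exact ⟨k, h1, heq⟩

theorem leMap_succ_self (k : ℕ) (x : S M k) :
    leMap M (Nat.le_succ k) x = stepHom M k x := by
  rw [leMap_succ M le_rfl, leMap_refl]

theorem col_conical (hM : IsConical M) : IsConical (Col M) := by
  intro α β h
  obtain ⟨a, x, rfl⟩ := cmk_surjective M α
  obtain ⟨b, y, rfl⟩ := cmk_surjective M β
  have ha : a ≤ max a b := le_max_left a b
  have hb : b ≤ max a b := le_max_right a b
  rw [cmk_add M ha hb] at h
  rw [← cmk_zero M (max a b)] at h
  obtain ⟨k, hk, heq⟩ := cmk_exact' M h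
  rw [map_add, map_zero] at heq
  obtain ⟨h1, h2⟩ := conical_S M hM k _ _ heq
  constructor
  · rw [cmk_eq_of_le M (ha.trans hk) x, ← leMap_comp M ha hk (ha.trans hk), h1, cmk_zero]
  · rw [cmk_eq_of_le M (hb.trans hk) y, ← leMap_comp M hb hk (hb.trans hk), h2, cmk_zero]

theorem refine_degenerate {N : Type*} [AddCommMonoid N] {a b c d : N} (h : a + b = c + d)
    (h0 : a = 0 ∨ b = 0 ∨ c = 0 ∨ d = 0) :
    ∃ x y z w : N, a = x + y ∧ b = z + w ∧ c = x + z ∧ d = y + w := by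
  rcases h0 with rfl | rfl | rfl | rfl
  · exact ⟨0, 0, c, d, by simp, by rw [← h, zero_add], by simp, by simp⟩
  · exact ⟨c, d, 0, 0, by rw [← h, add_zero], by simp, by simp, by simp⟩
  · exact ⟨0, a, 0, b, by simp, by simp, by simp, by rw [h, zero_add]⟩
  · exact ⟨a, 0, b, 0, by simp, by simp, by rw [h, add_zero], by simp⟩

theorem col_refinement : IsRefinement (Col M) := by
  intro α β γ δ h
  by_cases h0 : α = 0 ∨ β = 0 ∨ γ = 0 ∨ δ = 0
  · exact refine_degenerate h h0
  · push_neg at h0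
    obtain ⟨hα, hβ, hγ, hδ⟩ := h0
    obtain ⟨la, xa, rfl⟩ := cmk_surjective M α
    obtain ⟨lb, xb, rfl⟩ := cmk_surjective M β
    obtain ⟨lc, xc, rfl⟩ := cmk_surjective M γ
    obtain ⟨ld, xd, rfl⟩ := cmk_surjective M δ
    set K := max (max la lb) (max lc ld) with hK
    have hla : la ≤ K := by omega
    have hlb : lb ≤ K := by omega
    have hlc : lc ≤ K := by omega
    have hld : ld ≤ K := by omega
    rw [cmk_add M hla hlb, cmk_add M hlc hld] at h
    obtain ⟨k, hk, heq⟩ := cmk_exact' M h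
    rw [map_add, map_add] at heq
    rw [leMap_comp M hla hk (hla.trans hk), leMap_comp M hlb hk (hlb.trans hk),
      leMap_comp M hlc hk (hlc.trans hk), leMap_comp M hld hk (hld.trans hk)] at heq
    set Ya := leMap M (hla.trans hk) xa with hYa
    set Yb := leMap M (hlb.trans hk) xb with hYb
    set Yc := leMap M (hlc.trans hk) xc with hYc
    set Yd := leMap M (hld.trans hk) xd with hYd
    have ca : cmk M la xa = cmk M k Ya := cmk_eq_of_le M (hla.trans hk) xa
    have cb : cmk M lb xb = cmk M k Yb := cmk_eq_of_le M (hlb.trans hk) xb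
    have cc : cmk M lc xc = cmk M k Yc := cmk_eq_of_le M (hlc.trans hk) xc
    have cd : cmk M ld xd = cmk M k Yd := cmk_eq_of_le M (hld.trans hk) xd
    have hna : Ya ≠ 0 := fun h' => hα (by rw [ca, h', cmk_zero])
    have hnb : Yb ≠ 0 := fun h' => hβ (by rw [cb, h', cmk_zero])
    have hnc : Yc ≠ 0 := fun h' => hγ (by rw [cc, h', cmk_zero])
    have hnd : Yd ≠ 0 := fun h' => hδ (by rw [cd, h', cmk_zero])
    obtain ⟨X, Y, Z, W, e1, e2, e3, e4⟩ :=
      ext_refine (M := S M k) heq hna hnb hnc hnd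
    have push : ∀ (u : S M k) (V V' : S M (k + 1)),
        (ιExt (M := S M k) u : S M (k+1)) = V + V' →
        cmk M k u = cmk M (k + 1) V + cmk M (k + 1) V' := by
      intro u V V' he
      rw [cmk_eq_of_le M (Nat.le_succ k) u, leMap_succ_self]
      rw [cmk_add M (le_refl (k+1)) (le_refl (k+1)), leMap_refl, leMap_refl, ← he]
      rfl
    exact ⟨cmk M (k+1) X, cmk M (k+1) Y, cmk M (k+1) Z, cmk M (k+1) W,
      by rw [ca]; exact push _ _ _ e1,
      by rw [cb]; exact push _ _ _ e2,
      by rw [cc]; exact push _ _ _ e3,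
      by rw [cd]; exact push _ _ _ e4⟩

/-- the canonical map of a level into the colimit. -/
def colMk (n : ℕ) : S M n →+ Col M where
  toFun := cmk M n
  map_zero' := cmk_zero M n
  map_add' := fun x y => by
    rw [cmk_add M (le_refl n) (le_refl n) x y, leMap_refl, leMap_refl]

theorem colMk_injective : Function.Injective (colMk M 0) := by
  intro x y h
  obtain ⟨k, hk, heq⟩ := cmk_exact' M h
  exact leMap_injective M hk heq

theorem leMap_reflect {m n : ℕ} (h : m ≤ n) {x y : S M m}
    (hle : AlgLE (leMap M h x) (leMap M h y)) : AlgLE x y := by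
  induction n with
  | zero =>
      have hm : m = 0 := Nat.le_zero.1 h
      subst hm
      rwa [leMap_refl, leMap_refl] at hle
  | succ n ih =>
      rcases Nat.lt_or_ge m (n + 1) with hlt | hge
      · have h' : m ≤ n := Nat.lt_succ_iff.1 hlt
        rw [leMap_succ M h', leMap_succ M h'] at hle
        exact ih h' (ιExt_reflect hle)
      · have hm : m = n + 1 := le_antisymm h hge
        subst hm
        rwa [leMap_refl, leMap_refl] at hle

theorem colMk_apply (n : ℕ) (x : S M n) : colMk M n x = cmk M n x := rfl

theorem colMk_reflect {x y : S M 0} (h : AlgLE (colMk M 0 x) (colMk M 0 y)) :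
    AlgLE x y := by
  obtain ⟨ζ, hζ⟩ := h
  obtain ⟨b, z, rfl⟩ := cmk_surjective M ζ
  rw [colMk_apply, colMk_apply, cmk_add M (Nat.zero_le b) (le_refl b), leMap_refl] at hζ
  rw [cmk_eq_of_le M (Nat.zero_le b) y] at hζ
  obtain ⟨k, hk, heq⟩ := cmk_exact' M hζ
  rw [map_add, leMap_comp M (Nat.zero_le b) hk (Nat.zero_le k),
    leMap_comp M (Nat.zero_le b) hk (Nat.zero_le k)] at heq
  have hal : AlgLE (leMap M (Nat.zero_le k) x) (leMap M (Nat.zero_le k) y) :=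
    ⟨leMap M hk z, heq⟩
  exact leMap_reflect M (Nat.zero_le k) hal

end RefExt


/-- Every countable conical commutative monoid admits an order-embedding into a
countable conical refinement monoid. -/
theorem statement0 (M : Type) [AddCommMonoid M] [Countable M] (hM : IsConical M) :
    ∃ (N : Type) (instN : AddCommMonoid N), @OrderEmbedsIntoCCRM M _ N instN := by
  refine ⟨RefExt.Col M, RefExt.instAddCommMonoidCol M, RefExt.instCountableCol M,
    RefExt.col_conical M hM, RefExt.col_refinement M,
    RefExt.colMk M 0, RefExt.colMk_injective M, ?_⟩
  intro x y
  exact ⟨fun h => RefExt.algLE_map _ h, fun h => RefExt.colMk_reflect M h⟩
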